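/- arXiv:1810.09575 — 3 statements merged into one kernel-verified Lean document; each statement's English description precedes it below -/
import Mathlib

section
/- Let α_1, …, α_n : Finset Q be tolerable finsets whose syndromes are separated, i.e. H_{α_1 Δ ⋯ Δ α_n} equals the subgroup of (Finset Q, Δ) generated by H_{α_1} ∪ ⋯ ∪ H_{α_n}. Then α := α_1 Δ ⋯ Δ α_n is tolerable. (Lemma 3(i).) -/
open Finset
open scoped symmDiff Matrix

namespace CC

variable {Q : Type*} [Fintype Q] [DecidableEq Q]

/-- A subgroup of the abelian group `(Finset Q, ∆)`. -/
def IsSubgroup (S : Set (Finset Q)) : Prop :=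
  ∅ ∈ S ∧ ∀ a ∈ S, ∀ b ∈ S, a ∆ b ∈ S

/-- The subgroup of `(Finset Q, ∆)` generated by a set. -/
def closure (T : Set (Finset Q)) : Set (Finset Q) :=
  ⋂₀ {S : Set (Finset Q) | IsSubgroup S ∧ T ⊆ S}

/-- A CSS stabilizer code on the qubits `Q`. -/
structure CSS (Q : Type*) [Fintype Q] [DecidableEq Q] where
  SX : Set (Finset Q)
  SZ : Set (Finset Q)
  hSX : IsSubgroup SX
  hSZ : IsSubgroup SZ
  comm : ∀ a ∈ SZ, ∀ b ∈ SX, 2 ∣ (a ∩ b).card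

def ZX (C : CSS Q) : Set (Finset Q) := {γ | ∀ f ∈ C.SZ, 2 ∣ (γ ∩ f).card}

def ZZ (C : CSS Q) : Set (Finset Q) := {z | ∀ c ∈ C.SX, 2 ∣ (z ∩ c).card}

/-- Duality assumption. -/
def Dual (C : CSS Q) : Prop :=
  C.SZ = {z | ∀ γ ∈ ZX C, 2 ∣ (z ∩ γ).card} ∧
  C.SX = {c | ∀ z ∈ ZZ C, 2 ∣ (c ∩ z).card}

def LogicalX (C : CSS Q) (l : Finset Q) : Prop := l ∈ ZX C ∧ l ∉ C.SX

def LogicalZ (C : CSS Q) (l : Finset Q) : Prop := l ∈ ZZ C ∧ l ∉ C.SZ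

/-- Single-logical-qubit assumption. -/
def SingleQubit (C : CSS Q) : Prop :=
  (ZX C ≠ C.SX ∧ ∀ l l', LogicalX C l → LogicalX C l' → l ∆ l' ∈ C.SX) ∧
  (ZZ C ≠ C.SZ ∧ ∀ l l', LogicalZ C l → LogicalZ C l' → l ∆ l' ∈ C.SZ)

/-- Intersection axiom. -/
def Inter (C : CSS Q) : Prop :=
  ZZ C = {x | ∃ α ∈ ZX C, ∃ β ∈ ZX C, x = α ∩ β}

def G (C : CSS Q) (α : Finset Q) : Set (Finset Q) :=
  closure (C.SZ ∪ {x | ∃ β ∈ ZX C, x = α ∩ β})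

def H (C : CSS Q) (α : Finset Q) : Set (Finset Q) :=
  closure (C.SZ ∪ {x | ∃ β ∈ C.SX, x = α ∩ β})

def Zof (K : Set (Finset Q)) : Set (Finset Q) := {γ | ∀ h ∈ K, 2 ∣ (γ ∩ h).card}

def Tolerable (C : CSS Q) (α : Finset Q) : Prop := ∀ z ∈ G C α, ¬ LogicalZ C z

def g (b : Q → ℤ) (s : Finset Q) : ℤ := ∑ q ∈ s, b q

/-- T-invariance assumption. -/
def TInv (C : CSS Q) (b : Q → ℤ) : Prop :=
  (∀ β ∈ C.SX, (8 : ℤ) ∣ g b β) ∧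
  (∀ β ∈ C.SX, ∀ γ ∈ ZX C, (8 : ℤ) ∣ (g b β - 2 * g b (γ ∩ β)))

def E (C : CSS Q) (b : Q → ℤ) (α : Finset Q) : Set (Finset Q) :=
  {z | ∀ γ ∈ Zof (G C α), g b (γ ∩ α) ≡ 2 * ((z ∩ γ).card : ℤ) [ZMOD 4]}

/- Quantum setting -/

abbrev M (Q : Type*) [Fintype Q] [DecidableEq Q] :=
  Matrix (Q → ZMod 2) (Q → ZMod 2) ℂ

def supp (v : Q → ZMod 2) : Finset Q := Finset.univ.filter (fun q => v q = 1)

def ind (α : Finset Q) : Q → ZMod 2 := fun q => if q ∈ α then 1 else 0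

def XM (α : Finset Q) : M Q :=
  Matrix.of fun u v => if u = v + ind α then (1 : ℂ) else 0

noncomputable def ZM (α : Finset Q) : M Q :=
  Matrix.diagonal fun v => (-1 : ℂ) ^ (supp v ∩ α).card

noncomputable def AM (b : Q → ℤ) (α : Finset Q) : M Q :=
  Matrix.diagonal fun v => Complex.I ^ (g b (α ∩ supp v))

noncomputable def UM (b : Q → ℤ) : M Q :=
  Matrix.diagonal fun v => Complex.exp (Real.pi * Complex.I / 4) ^ (g b (supp v))

def Encoded (C : CSS Q) (ρ : M Q) : Prop :=
  ρ.trace = 1 ∧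
  (∀ c ∈ C.SX, XM c * ρ = ρ ∧ ρ * XM c = ρ) ∧
  (∀ f ∈ C.SZ, ZM f * ρ = ρ ∧ ρ * ZM f = ρ)

instance : Std.Commutative (α := Finset Q) (· ∆ ·) := ⟨symmDiff_comm⟩
instance : Std.Associative (α := Finset Q) (· ∆ ·) := ⟨symmDiff_assoc⟩

/-- Iterated symmetric difference over a finite index set. -/
def bigΔ {ι : Type*} (s : Finset ι) (f : ι → Finset Q) : Finset Q :=
  s.fold (· ∆ ·) ∅ f

-- auxiliary lemmas
theorem card_symmDiff_par' (a b : Finset Q) (ha : 2 ∣ a.card) (hb : 2 ∣ b.card) :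
    2 ∣ (a ∆ b).card := by
  have hinf : a ∩ b = a ⊓ b := rfl
  have hsup : a ∪ b = a ⊔ b := rfl
  have h1 : (a ∆ b).card + (a ∩ b).card = (a ∪ b).card := by
    rw [hinf, hsup, ← Finset.card_union_of_disjoint (disjoint_symmDiff_inf a b)]
    congr 1
    exact symmDiff_sup_inf a b
  have h2 := Finset.card_union_add_card_inter a b
  omega

theorem even_inter_symmDiff' (β a b : Finset Q) (ha : 2 ∣ (β ∩ a).card)
    (hb : 2 ∣ (β ∩ b).card) : 2 ∣ (β ∩ (a ∆ b)).card := by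
  have h : β ∩ (a ∆ b) = (β ∩ a) ∆ (β ∩ b) := inf_symmDiff_distrib_left β a b
  rw [h]; exact card_symmDiff_par' _ _ ha hb

theorem even_symmDiff_inter' (a b c : Finset Q) (ha : 2 ∣ (a ∩ c).card)
    (hb : 2 ∣ (b ∩ c).card) : 2 ∣ ((a ∆ b) ∩ c).card := by
  rw [Finset.inter_comm]
  exact even_inter_symmDiff' c a b (by rwa [Finset.inter_comm]) (by rwa [Finset.inter_comm])

theorem closure_subset' {T S : Set (Finset Q)} (hS : IsSubgroup S) (hTS : T ⊆ S) :
    closure T ⊆ S := fun _ hx => hx S ⟨hS, hTS⟩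

theorem subset_closure' {T : Set (Finset Q)} : T ⊆ closure T :=
  fun _ hx _ hS => hS.2 hx

theorem bigΔ_inter' {ι : Type*} [DecidableEq ι] (s : Finset ι) (f : ι → Finset Q) (t : Finset Q) :
    bigΔ s f ∩ t = bigΔ s (fun i => f i ∩ t) := by
  induction s using Finset.induction_on with
  | empty => simp [bigΔ]
  | @insert a s ha ih =>
    have hins : ∀ g : ι → Finset Q, bigΔ (insert a s) g = g a ∆ bigΔ s g := fun g =>
      Finset.fold_insert ha
    have h : (f a ∆ bigΔ s f) ∩ t
        = (f a ∩ t) ∆ (bigΔ s f ∩ t) := inf_symmDiff_distrib_right _ _ _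
    rw [hins, hins, h, ih]

theorem bigΔ_mem' {ι : Type*} [DecidableEq ι] {S : Set (Finset Q)} (hS : IsSubgroup S)
    (s : Finset ι) (f : ι → Finset Q) (hf : ∀ i ∈ s, f i ∈ S) : bigΔ s f ∈ S := by
  induction s using Finset.induction_on with
  | empty => exact hS.1
  | @insert a s ha ih =>
    rw [bigΔ, Finset.fold_insert ha]
    exact hS.2 _ (hf a (Finset.mem_insert_self a s)) _
      (ih fun i hi => hf i (Finset.mem_insert_of_mem hi))


/-- Lemma 3(i): a product of tolerable errors with separated syndromes is tolerable. -/
theorem tolerable_of_separated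
    (C : CSS Q) (hdual : Dual C) (hsingle : SingleQubit C) (hinter : Inter C)
    (n : ℕ) (αs : Fin n → Finset Q) (htol : ∀ i, Tolerable C (αs i))
    (hsep : H C (bigΔ Finset.univ αs) = closure (⋃ i, H C (αs i))) :
    Tolerable C (bigΔ Finset.univ αs) := by
  set α := bigΔ Finset.univ αs with hα
  intro z hz hlog
  obtain ⟨hzZZ, hznSZ⟩ := hlog
  have hrep : ∃ s ∈ C.SZ, ∃ β ∈ ZX C, z = s ∆ (α ∩ β) := by
    have hsub : IsSubgroup {x : Finset Q | ∃ s ∈ C.SZ, ∃ β ∈ ZX C, x = s ∆ (α ∩ β)} := by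
      constructor
      · exact ⟨∅, C.hSZ.1, ∅, fun f hf => by simp, by simp⟩
      · rintro x ⟨s, hs, β, hβ, rfl⟩ y ⟨s', hs', β', hβ', rfl⟩
        refine ⟨s ∆ s', C.hSZ.2 s hs s' hs', β ∆ β', ?_, ?_⟩
        · intro f hf
          exact even_symmDiff_inter' β β' f (hβ f hf) (hβ' f hf)
        · have h : α ∩ (β ∆ β') = (α ∩ β) ∆ (α ∩ β') := inf_symmDiff_distrib_left α β β'
          rw [h]
          ac_rfl
    refine closure_subset' hsub ?_ hz
    rintro x (hx | ⟨β, hβ, rfl⟩)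
    · exact ⟨x, hx, ∅, fun f hf => by simp, by rw [Finset.inter_empty]; exact (symmDiff_bot x).symm⟩
    · exact ⟨∅, C.hSZ.1, β, hβ, (bot_symmDiff _).symm⟩
  obtain ⟨s, hs, β, hβ, rfl⟩ := hrep
  have hαβZZ : ∀ c ∈ C.SX, 2 ∣ ((α ∩ β) ∩ c).card := by
    intro c hc
    have h1 : 2 ∣ (s ∩ c).card := C.comm s hs c hc
    have h2 : 2 ∣ ((s ∆ (α ∩ β)) ∩ c).card := hzZZ c hc
    have h3 : (α ∩ β) ∩ c = (s ∆ (s ∆ (α ∩ β))) ∩ c := by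
      rw [symmDiff_symmDiff_cancel_left]
    rw [h3]
    exact even_symmDiff_inter' _ _ _ h1 h2
  have hβH : ∀ h ∈ H C α, 2 ∣ (β ∩ h).card := by
    intro h hh
    refine closure_subset' (S := {h : Finset Q | 2 ∣ (β ∩ h).card}) ?_ ?_ hh
    · constructor
      · simp
      · intro a ha b hb
        exact even_inter_symmDiff' β a b ha hb
    · rintro x (hx | ⟨c, hc, rfl⟩)
      · exact hβ x hx
      · have h : β ∩ (α ∩ c) = (α ∩ β) ∩ c := by
          ext q; simp only [Finset.mem_inter]; tauto
        show 2 ∣ (β ∩ (α ∩ c)).card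
        rw [h]
        exact hαβZZ c hc
  have hi : ∀ i, (αs i ∩ β) ∈ C.SZ := by
    intro i
    have hmemZZ : αs i ∩ β ∈ ZZ C := by
      intro c hc
      have hmem : αs i ∩ c ∈ H C α := by
        rw [hsep]
        exact subset_closure' (Set.mem_iUnion.2 ⟨i, subset_closure' (Or.inr ⟨c, hc, rfl⟩)⟩)
      have heq : (αs i ∩ β) ∩ c = β ∩ (αs i ∩ c) := by
        ext q; simp only [Finset.mem_inter]; tauto
      rw [heq]
      exact hβH _ hmem
    have hG : αs i ∩ β ∈ G C (αs i) := subset_closure' (Or.inr ⟨β, hβ, rfl⟩)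
    by_contra hne
    exact htol i _ hG ⟨hmemZZ, hne⟩
  have hbig : α ∩ β = bigΔ Finset.univ (fun i => αs i ∩ β) := bigΔ_inter' Finset.univ αs β
  have hαβS : α ∩ β ∈ C.SZ := by
    rw [hbig]
    exact bigΔ_mem' C.hSZ Finset.univ _ (fun i _ => hi i)
  exact hznSZ (C.hSZ.2 s hs _ hαβS)


end CC
end

section
/- For every α : Finset Q, the group H_α contains no logical Z operator; that is, H_α ∩ Z_Z(S) ⊆ S_Z. (Lemma A2.) -/
open Finset
open scoped symmDiff Matrix

namespace CC

variable {Q : Type*} [Fintype Q] [DecidableEq Q]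

/-- Auxiliary lemmas for Lemma A2. -/
private lemma card_symmDiff_aux (a b : Finset Q) :
    (a ∆ b).card + 2 * (a ∩ b).card = a.card + b.card := by
  have h : a ∆ b = (a \ b) ∪ (b \ a) := by
    ext x; simp [Finset.mem_symmDiff]
  have hd : Disjoint (a \ b) (b \ a) := by
    simp [Finset.disjoint_left]; tauto
  have h1 := Finset.card_sdiff_add_card_inter a b
  have h2 := Finset.card_sdiff_add_card_inter b a
  rw [Finset.inter_comm b a] at h2
  rw [h, Finset.card_union_of_disjoint hd]
  omega

private lemma even_symmDiff {a b : Finset Q} (ha : 2 ∣ a.card) (hb : 2 ∣ b.card) :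
    2 ∣ (a ∆ b).card := by
  have := card_symmDiff_aux a b
  omega

private lemma symmDiff_inter_right (a b c : Finset Q) :
    (a ∆ b) ∩ c = (a ∩ c) ∆ (b ∩ c) := by
  ext x; simp [Finset.mem_symmDiff]; tauto

private lemma inter_symmDiff_left (a b c : Finset Q) :
    c ∩ (a ∆ b) = (c ∩ a) ∆ (c ∩ b) := by
  ext x; simp [Finset.mem_symmDiff]; tauto

private lemma zz_symmDiff {C : CSS Q} {a b : Finset Q}
    (ha : a ∈ ZZ C) (hb : b ∈ ZZ C) : a ∆ b ∈ ZZ C := by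
  intro c hc
  rw [symmDiff_inter_right]
  exact even_symmDiff (ha c hc) (hb c hc)

private lemma H_mem {C : CSS Q} {α h : Finset Q} (hh : h ∈ H C α) :
    ∃ s ∈ C.SZ, ∃ β ∈ C.SX, h = s ∆ (α ∩ β) := by
  have key : h ∈ {x | ∃ s ∈ C.SZ, ∃ β ∈ C.SX, x = s ∆ (α ∩ β)} := by
    refine Set.mem_sInter.mp hh _ ⟨⟨?_, ?_⟩, ?_⟩
    · exact ⟨∅, C.hSZ.1, ∅, C.hSX.1, by
        rw [Finset.inter_empty, ← Finset.bot_eq_empty, symmDiff_bot]⟩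
    · rintro a ⟨s, hs, β, hβ, rfl⟩ b ⟨s', hs', β', hβ', rfl⟩
      refine ⟨s ∆ s', C.hSZ.2 s hs s' hs', β ∆ β', C.hSX.2 β hβ β' hβ', ?_⟩
      have hdist : α ∩ (β ∆ β') = (α ∩ β) ∆ (α ∩ β') := inter_symmDiff_left β β' α
      rw [hdist]
      exact symmDiff_symmDiff_symmDiff_comm s (α ∩ β) s' (α ∩ β')
    · rintro x (hx | ⟨β, hβ, rfl⟩)
      · exact ⟨x, hx, ∅, C.hSX.1, by
          rw [Finset.inter_empty, ← Finset.bot_eq_empty, symmDiff_bot]⟩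
      · exact ⟨∅, C.hSZ.1, β, hβ, by
          rw [← Finset.bot_eq_empty, bot_symmDiff]⟩
  exact key

/-- Key step: an element of `Z_Z` contained in an `X`-stabilizer lies in `S_Z`. -/
private lemma key_lemma (C : CSS Q) (hdual : Dual C) (hsingle : SingleQubit C)
    (hinter : Inter C) {z β : Finset Q}
    (hz : z ∈ ZZ C) (hβ : β ∈ C.SX) (hzβ : z ⊆ β) : z ∈ C.SZ := by
  have hz' := hz
  rw [hinter] at hz'
  obtain ⟨μ, hμ, ν, hν, hzmn⟩ := hz'
  rw [hdual.1]
  intro γ hγ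
  by_cases hμSX : μ ∈ C.SX
  · have h1 : ν ∩ γ ∈ ZZ C := by
      rw [hinter]; exact ⟨ν, hν, γ, hγ, rfl⟩
    have h2 : 2 ∣ ((ν ∩ γ) ∩ μ).card := h1 μ hμSX
    have he : z ∩ γ = (ν ∩ γ) ∩ μ := by
      rw [hzmn]; ext x; simp [Finset.mem_inter]; tauto
    rw [he]; exact h2
  · by_cases hνSX : ν ∈ C.SX
    · have h1 : μ ∩ γ ∈ ZZ C := by
        rw [hinter]; exact ⟨μ, hμ, γ, hγ, rfl⟩
      have h2 : 2 ∣ ((μ ∩ γ) ∩ ν).card := h1 ν hνSX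
      have he : z ∩ γ = (μ ∩ γ) ∩ ν := by
        rw [hzmn]; ext x; simp [Finset.mem_inter]; tauto
      rw [he]; exact h2
    · by_cases hγSX : γ ∈ C.SX
      · exact hz γ hγSX
      · have hc : μ ∆ γ ∈ C.SX := hsingle.1.2 μ γ ⟨hμ, hμSX⟩ ⟨hγ, hγSX⟩
        have h1 : 2 ∣ (z ∩ (μ ∆ γ)).card := hz _ hc
        have h2 : 2 ∣ (z ∩ μ).card := by
          have hzm : z ∩ μ = z := by
            rw [hzmn]; ext x; simp [Finset.mem_inter]; tauto
          have hzb : z ∩ β = z := Finset.inter_eq_left.mpr hzβ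
          have := hz β hβ
          rw [hzb] at this
          rw [hzm]; exact this
        have hγeq : γ = μ ∆ (μ ∆ γ) := (symmDiff_symmDiff_cancel_left μ γ).symm
        rw [hγeq, inter_symmDiff_left]
        exact even_symmDiff h2 h1

/-- Lemma A2: `H_α` contains no logical `Z` operator. -/
theorem H_no_logical
    (C : CSS Q) (hdual : Dual C) (hsingle : SingleQubit C) (hinter : Inter C)
    (α : Finset Q) :
    H C α ∩ ZZ C ⊆ C.SZ := by
  rintro h ⟨hH, hZZ⟩
  obtain ⟨s, hs, β, hβ, rfl⟩ := H_mem hH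
  have hsZZ : s ∈ ZZ C := fun c hc => C.comm s hs c hc
  have hzZZ : α ∩ β ∈ ZZ C := by
    have hcancel : s ∆ (s ∆ (α ∩ β)) = α ∩ β := symmDiff_symmDiff_cancel_left s (α ∩ β)
    rw [← hcancel]
    exact zz_symmDiff hsZZ hZZ
  have hzSZ : α ∩ β ∈ C.SZ :=
    key_lemma C hdual hsingle hinter hzZZ hβ Finset.inter_subset_right
  exact C.hSZ.2 s hs _ hzSZ

end CC
end

section
/- For all α, β : Finset Q, the matrix identity X_β · A_α · X_β = i^{g(α ∩ β)} · Z_{α ∩ β} · A_α holds in M, provided b q is odd for every q ∈ Q. (The key commutation relation between X-type Pauli operators and the diagonal phase operator A_α induced by the transversal T gate.) -/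
open Finset
open scoped symmDiff Matrix

namespace CC

variable {Q : Type*} [Fintype Q] [DecidableEq Q]

omit [Fintype Q] in
lemma add_ind_add_ind (w : Q → ZMod 2) (β : Finset Q) : w + ind β + ind β = w := by
  funext q
  have h : ∀ x y : ZMod 2, x + y + y = x := by decide
  exact h _ _

lemma conj_diag (d : (Q → ZMod 2) → ℂ) (β : Finset Q) :
    XM β * Matrix.diagonal d * XM β = Matrix.diagonal fun v => d (v + ind β) := by
  ext u w
  rw [Matrix.mul_assoc, Matrix.mul_apply]
  simp only [Matrix.diagonal_mul, XM, Matrix.of_apply, mul_ite, mul_one, mul_zero, ite_mul,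
    one_mul, zero_mul]
  rw [Finset.sum_ite_eq' Finset.univ (w + ind β)
    (fun v => if u = v + ind β then d v else 0)]
  simp only [Finset.mem_univ, if_true, add_ind_add_ind]
  rw [Matrix.diagonal_apply]
  by_cases h : u = w <;> simp [h]

lemma supp_add (v : Q → ZMod 2) (β : Finset Q) : supp (v + ind β) = supp v ∆ β := by
  have h2 : ∀ x y : ZMod 2, x + y = 1 ↔ ((x = 1) ↔ ¬ y = 1) := by decide
  ext q
  by_cases h : q ∈ β <;>
    simp [supp, ind, Finset.mem_symmDiff, Pi.add_apply, h, h2]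

omit [Fintype Q] in
lemma g_symmDiff (b : Q → ℤ) (x y : Finset Q) :
    g b (x ∆ y) = g b x + g b y - 2 * g b (x ∩ y) := by
  have h1 : x ∆ y = (x ∪ y) \ (x ∩ y) := symmDiff_eq_sup_sdiff_inf x y
  have h2 := Finset.sum_union_inter (s₁ := x) (s₂ := y) (f := b)
  simp only [g, h1, Finset.sum_sdiff_eq_sub Finset.inter_subset_union]
  omega

omit [Fintype Q] in
lemma neg_one_g (b : Q → ℤ) (hb : ∀ q, Odd (b q)) (s : Finset Q) :
    (-1 : ℂ) ^ (g b s) = (-1 : ℂ) ^ s.card := by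
  classical
  induction s using Finset.induction with
  | empty => simp [g]
  | insert _ _ ha ih =>
      rw [Finset.card_insert_of_notMem ha, g, Finset.sum_insert ha,
        zpow_add₀ (by norm_num : (-1:ℂ) ≠ 0), (hb _).neg_one_zpow, pow_succ, ← g, ih]
      ring

lemma neg_one_zpow_neg' (c : ℤ) : ((-1:ℂ))^(-c) = (-1)^c := by
  rcases Int.even_or_odd c with h | h
  · rw [h.neg_one_zpow, (h.neg).neg_one_zpow]
  · rw [h.neg_one_zpow, (h.neg).neg_one_zpow]

lemma I_zpow_key (a c d : ℤ) : Complex.I ^ (a + d - 2*c) = Complex.I ^ d * ((-1:ℂ))^c * Complex.I ^ a := by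
  rw [zpow_sub₀ Complex.I_ne_zero, zpow_add₀ Complex.I_ne_zero, zpow_mul Complex.I 2 c,
    div_eq_mul_inv, ← zpow_neg, show ((Complex.I)^(2:ℤ)) = -1 from by rw [zpow_two, Complex.I_mul_I],
    neg_one_zpow_neg']
  ring

/-- The key commutation relation between `X`-type Pauli operators and the diagonal phase
operator `A_α` induced by the transversal T gate:
`X_β · A_α · X_β = i^{g(α ∩ β)} · Z_{α ∩ β} · A_α`. -/
theorem X_A_commutation
    (b : Q → ℤ) (hb : ∀ q, Odd (b q)) (α β : Finset Q) :
    XM β * AM b α * XM β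
      = (Complex.I ^ (g b (α ∩ β))) • (ZM (α ∩ β) * AM b α) := by
  classical
  unfold AM ZM
  rw [conj_diag, Matrix.diagonal_mul_diagonal]
  ext u w
  rw [Matrix.smul_apply, Matrix.diagonal_apply, Matrix.diagonal_apply]
  by_cases h : u = w
  · simp only [h, if_true, smul_eq_mul]
    have hd : α ∩ (supp w ∆ β) = (α ∩ supp w) ∆ (α ∩ β) := inf_symmDiff_distrib_left α (supp w) β
    have hc : (α ∩ supp w) ∩ (α ∩ β) = supp w ∩ (α ∩ β) := by
      ext q; simp only [Finset.mem_inter]; tauto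
    rw [supp_add, hd, g_symmDiff, hc,
      I_zpow_key (g b (α ∩ supp w)) (g b (supp w ∩ (α ∩ β))) (g b (α ∩ β)),
      neg_one_g b hb]
    ring
  · simp [h]

end CC
end
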